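/- Let E be a barreled topological vector space in which every bounded set is precompact. Let (T_ε)_{ε∈(0,1]} be a family of continuous linear functionals on E such that for every u∈E and every m∈ℕ, |T_ε(u)| ≤ ε^m for all sufficiently small ε. If (u_ε)_{ε∈(0,1]} is an asymptotically bounded net in E, then for every m∈ℕ, |T_ε(u_ε)| ≤ ε^m for all sufficiently small ε. -/

import Mathlib

open Pointwise

/-- If `E` is barreled with every bounded set precompact, `(T_ε)` is a negligible net of
continuous linear functionals (pointwise), and `(u_ε)` is asymptotically bounded, then
`(T_ε(u_ε))` is negligible. -/
theorem stmt2 {E : Type*} [AddCommGroup E] [Module ℂ E] [UniformSpace E]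
    [IsUniformAddGroup E] [ContinuousSMul ℂ E] [BarrelledSpace ℂ E]
    (hcpt : ∀ S : Set E, Bornology.IsVonNBounded ℂ S → TotallyBounded S)
    (T : ℝ → (E →L[ℂ] ℂ))
    (hT : ∀ (v : E) (m : ℕ), ∃ ε₀ : ℝ, 0 < ε₀ ∧
      ∀ ε ∈ Set.Ioc (0:ℝ) 1, ε ≤ ε₀ → ‖T ε v‖ ≤ ε ^ m)
    (u : ℝ → E)
    (hu : ∀ U ∈ nhds (0:E), ∃ (n : ℕ) (ε₀ : ℝ), 0 < ε₀ ∧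
      ∀ ε ∈ Set.Ioc (0:ℝ) 1, ε ≤ ε₀ → u ε ∈ (n : ℝ) • U) :
    ∀ m : ℕ, ∃ ε₀ : ℝ, 0 < ε₀ ∧
      ∀ ε ∈ Set.Ioc (0:ℝ) 1, ε ≤ ε₀ → ‖T ε (u ε)‖ ≤ ε ^ m := by
  intro m
  by_contra hcon
  push_neg at hcon
  -- extract a bad sequence ε_j ≤ 1/(j+1)
  have key : ∀ j : ℕ, ∃ ε, ε ∈ Set.Ioc (0:ℝ) 1 ∧ ε ≤ 1/(j+1) ∧ ε ^ m < ‖T ε (u ε)‖ := by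
    intro j
    obtain ⟨ε, h1, h2, h3⟩ := hcon (1/(j+1)) (by positivity)
    exact ⟨ε, h1, h2, h3⟩
  choose e he1 he2 he3 using key
  have hepos : ∀ j, 0 < e j := fun j => (he1 j).1
  -- rescaled countable family
  set S : ℕ → E →L[ℂ] ℂ := fun j => ((((e j) ^ (m+1) : ℝ) : ℂ))⁻¹ • T (e j) with hS
  have hSnorm : ∀ j v, ‖S j v‖ = ((e j) ^ (m+1))⁻¹ * ‖T (e j) v‖ := by
    intro j v
    have h : ‖S j v‖ = ‖((((e j) ^ (m+1) : ℝ)) : ℂ)⁻¹‖ * ‖T (e j) v‖ := by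
      simp [hS, norm_smul]
    rw [h, norm_inv, Complex.norm_real, Real.norm_eq_abs,
      abs_of_pos (pow_pos (hepos j) (m+1))]
  -- pointwise boundedness
  have hbdd : ∀ x : E, BddAbove (Set.range fun j => ‖S j x‖) := by
    intro x
    obtain ⟨d, hd, hb⟩ := hT x (m+1)
    obtain ⟨N, hN⟩ := exists_nat_ge (1/d)
    refine ⟨1 + ∑ i ∈ Finset.range N, ‖S i x‖, ?_⟩
    rintro r ⟨j, rfl⟩
    rcases lt_or_ge j N with hj | hj
    · have : ‖S j x‖ ≤ ∑ i ∈ Finset.range N, ‖S i x‖ :=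
        Finset.single_le_sum (f := fun i => ‖S i x‖) (fun i _ => norm_nonneg _)
          (Finset.mem_range.mpr hj)
      linarith
    · have hejd : e j ≤ d := by
        have h1 : (1:ℝ)/d ≤ j + 1 := by
          have : (N:ℝ) ≤ j + 1 := by exact_mod_cast Nat.le_succ_of_le hj
          linarith
        have := he2 j
        calc e j ≤ 1/(j+1) := he2 j
          _ ≤ d := by
            rw [div_le_iff₀ (by positivity)]
            rw [div_le_iff₀ hd] at h1
            linarith
      have hTb := hb (e j) (he1 j) hejd
      have : ‖S j x‖ ≤ 1 := by
        rw [hSnorm]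
        rw [inv_mul_le_iff₀ (pow_pos (hepos j) (m+1)), mul_one]
        exact hTb
      have hsum : (0:ℝ) ≤ ∑ i ∈ Finset.range N, ‖S i x‖ :=
        Finset.sum_nonneg fun i _ => norm_nonneg _
      linarith
  -- Banach–Steinhaus
  have hq := norm_withSeminorms ℂ ℂ
  have hec : UniformEquicontinuous ((↑) ∘ S) := by
    apply hq.banach_steinhaus
    intro k x
    simpa using hbdd x
  have heq := hec.equicontinuous (0 : E)
  rw [Metric.equicontinuousAt_iff_right] at heq
  have hev := heq 1 one_pos
  -- the equicontinuity neighborhood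
  obtain ⟨n, ε₁, hε₁, hn⟩ := hu {y | ∀ i, dist ((S i) (0:E)) ((S i) y) < 1} hev
  -- pick j large
  obtain ⟨j, hj⟩ := exists_nat_ge (max (n:ℝ) (1/ε₁))
  have hjn : (n:ℝ) ≤ j := le_trans (le_max_left _ _) hj
  have hje : e j ≤ ε₁ := by
    have h1 : (1:ℝ)/ε₁ ≤ j := le_trans (le_max_right _ _) hj
    calc e j ≤ 1/(j+1) := he2 j
      _ ≤ ε₁ := by
        rw [div_le_iff₀ (by positivity)]
        rw [div_le_iff₀ hε₁] at h1
        nlinarith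
  obtain ⟨w, hwU, hw⟩ := hn (e j) (he1 j) hje
  -- estimate
  have hwb : ‖T (e j) w‖ ≤ (e j) ^ (m+1) := by
    have := hwU j
    simp only [map_zero, dist_zero_left] at this
    have h2 : ‖S j w‖ < 1 := by simpa [dist_eq_norm] using this
    rw [hSnorm] at h2
    rw [inv_mul_lt_iff₀ (pow_pos (hepos j) (m+1)), mul_one] at h2
    exact le_of_lt h2
  have hw' : (n:ℝ) • w = u (e j) := hw
  have hval : ‖T (e j) (u (e j))‖ = n * ‖T (e j) w‖ := by
    rw [← hw', Nat.cast_smul_eq_nsmul, map_nsmul]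
    rw [nsmul_eq_mul]; simp [abs_of_nonneg]
  have hfinal : ‖T (e j) (u (e j))‖ ≤ (e j) ^ m := by
    rw [hval]
    have h1 : (n:ℝ) * ‖T (e j) w‖ ≤ n * (e j) ^ (m+1) :=
      mul_le_mul_of_nonneg_left hwb (Nat.cast_nonneg n)
    have h2 : (n:ℝ) * (e j) ^ (m+1) = (n * e j) * (e j) ^ m := by ring
    have h3 : (n:ℝ) * e j ≤ 1 := by
      have := he2 j
      have hj1 : (n:ℝ) ≤ j + 1 := by linarith
      have hepos' := (hepos j).le
      calc (n:ℝ) * e j ≤ (j+1) * (1/(j+1)) := by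
            apply mul_le_mul hj1 (he2 j) hepos' (by positivity)
        _ = 1 := by field_simp
    calc (n:ℝ) * ‖T (e j) w‖ ≤ (n * e j) * (e j) ^ m := by rw [← h2]; exact h1
      _ ≤ 1 * (e j) ^ m :=
        mul_le_mul_of_nonneg_right h3 (pow_nonneg (hepos j).le m)
      _ = (e j) ^ m := one_mul _
  exact absurd hfinal (not_le.mpr (he3 j))
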